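/- (Riesz–Fischer for gauge integrals) Fix p > 0 and let (fⱼ) be a sequence of measurable point functions on I such that |fⱼ − f_k|^p is HK-integrable for all j,k and for every ε > 0 there is K with ∫_I |fⱼ − f_k|^p dμ < ε for all j > k ≥ K. Then there exists a point function f such that |fⱼ − f|^p is integrable for all j and ∫_I |fⱼ − f|^p dμ → 0; moreover f is unique up to equality almost everywhere. -/

import Mathlib

open Set Filter

/-- A brick (compact non-degenerate interval) in `ι → ℝ`. -/
structure Brick (ι : Type*) [Fintype ι] where
  lower : ι → ℝ
  upper : ι → ℝ
  lt : ∀ j, lower j < upper j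

variable {ι : Type*} [Fintype ι]

namespace Brick

/-- The underlying closed set of a brick. -/
def toSet (I : Brick ι) : Set (ι → ℝ) := {x | ∀ j, x j ∈ Set.Icc (I.lower j) (I.upper j)}

/-- The open interior of a brick. -/
def inter (I : Brick ι) : Set (ι → ℝ) := {x | ∀ j, x j ∈ Set.Ioo (I.lower j) (I.upper j)}

/-- The volume of a brick. -/
noncomputable def vol (I : Brick ι) : ℝ := ∏ j, (I.upper j - I.lower j)

end Brick

/-- A tagged division of a brick `I`: finitely many non-overlapping sub-bricks covering `I`,
each with a tag point belonging to it. -/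
structure TaggedDiv {ι : Type*} [Fintype ι] (I : Brick ι) where
  pieces : Finset (Brick ι × (ι → ℝ))
  subset_of_mem : ∀ p ∈ pieces, (p.1 : Brick ι).toSet ⊆ I.toSet
  tag_mem : ∀ p ∈ pieces, p.2 ∈ (p.1 : Brick ι).toSet
  nonoverlap : ∀ p ∈ pieces, ∀ q ∈ pieces, p ≠ q →
    (p.1 : Brick ι).inter ∩ (q.1 : Brick ι).inter = ∅
  cover : I.toSet = ⋃ p ∈ pieces, (p.1 : Brick ι).toSet

/-- A gauge on a brick: a function positive at each point of the brick. -/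
def IsGauge (I : Brick ι) (δ : (ι → ℝ) → ℝ) : Prop := ∀ x ∈ I.toSet, 0 < δ x

/-- A tagged division is compatible with the gauge `δ` if each brick lies in the open ball
of radius `δ` about its tag. -/
def Compat {I : Brick ι} (D : TaggedDiv I) (δ : (ι → ℝ) → ℝ) : Prop :=
  ∀ p ∈ D.pieces, (p.1 : Brick ι).toSet ⊆ Metric.ball p.2 (δ p.2)

/-- The Riemann sum of `f` over a tagged division. -/
noncomputable def riemannSum {I : Brick ι} (f : (ι → ℝ) → ℝ) (D : TaggedDiv I) : ℝ :=
  ∑ p ∈ D.pieces, f p.2 * (p.1 : Brick ι).vol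

/-- `f` has Henstock–Kurzweil integral `A` on the brick `I`. -/
def HasHK (I : Brick ι) (f : (ι → ℝ) → ℝ) (A : ℝ) : Prop :=
  ∀ ε > 0, ∃ δ : (ι → ℝ) → ℝ, IsGauge I δ ∧
    ∀ D : TaggedDiv I, Compat D δ → |riemannSum f D - A| < ε

open scoped ENNReal Classical

/-- The sum of `|h|` over a tagged division, for an interval-point function `h`. -/
noncomputable def varSum {I : Brick ι} (h : Brick ι → (ι → ℝ) → ℝ) (D : TaggedDiv I) : ℝ :=
  ∑ p ∈ D.pieces, |h p.1 p.2|

/-- The (Henstock) variation of an interval-point function `h` on a brick `I`. -/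
noncomputable def variation (I : Brick ι) (h : Brick ι → (ι → ℝ) → ℝ) : ℝ≥0∞ :=
  ⨅ δ ∈ {δ : (ι → ℝ) → ℝ | IsGauge I δ},
    ⨆ D ∈ {D : TaggedDiv I | Compat D δ}, ENNReal.ofReal (varSum h D)

/-- The variation of `h` on `I` with tags restricted to the set `X`. -/
noncomputable def variationOn (I : Brick ι) (h : Brick ι → (ι → ℝ) → ℝ)
    (X : Set (ι → ℝ)) : ℝ≥0∞ :=
  variation I (fun J P => if P ∈ X then h J P else 0)

/-- The outer measure of a set `X` in the brick `I`, defined via the Henstock variation of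
the volume function restricted to `X`. -/
noncomputable def mustar (I : Brick ι) (X : Set (ι → ℝ)) : ℝ≥0∞ :=
  variationOn I (fun J _ => J.vol) X

section RFAux

variable {ι : Type*} [Fintype ι]

namespace Brick

lemma mem_toSet {I : Brick ι} {x : ι → ℝ} :
    x ∈ I.toSet ↔ ∀ j, I.lower j ≤ x j ∧ x j ≤ I.upper j := by
  simp [toSet, Set.mem_Icc]

lemma lower_mem_toSet (I : Brick ι) : I.lower ∈ I.toSet := by
  simp [mem_toSet]; intro j; exact (I.lt j).le

lemma upper_mem_toSet (I : Brick ι) : I.upper ∈ I.toSet := by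
  simp [mem_toSet]; intro j; exact (I.lt j).le

lemma toSet_nonempty (I : Brick ι) : I.toSet.Nonempty := ⟨I.lower, I.lower_mem_toSet⟩

noncomputable def mid (I : Brick ι) : ι → ℝ := fun j => (I.lower j + I.upper j) / 2

lemma lower_lt_mid (I : Brick ι) (j : ι) : I.lower j < I.mid j := by
  have := I.lt j; unfold mid; linarith

lemma mid_lt_upper (I : Brick ι) (j : ι) : I.mid j < I.upper j := by
  have := I.lt j; unfold mid; linarith

lemma mid_mem_inter (I : Brick ι) : I.mid ∈ I.inter := by
  intro j; exact ⟨I.lower_lt_mid j, I.mid_lt_upper j⟩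

lemma inter_nonempty (I : Brick ι) : I.inter.Nonempty := ⟨I.mid, I.mid_mem_inter⟩

lemma inter_subset_toSet (I : Brick ι) : I.inter ⊆ I.toSet := by
  intro x hx j; exact ⟨(hx j).1.le, (hx j).2.le⟩

lemma vol_pos (I : Brick ι) : 0 < I.vol :=
  Finset.prod_pos (fun j _ => sub_pos.2 (I.lt j))

lemma vol_nonneg (I : Brick ι) : 0 ≤ I.vol := I.vol_pos.le

lemma bounds_of_toSet_subset {J K : Brick ι} (h : J.toSet ⊆ K.toSet) (j : ι) :
    K.lower j ≤ J.lower j ∧ J.upper j ≤ K.upper j := by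
  have h1 := mem_toSet.1 (h J.lower_mem_toSet) j
  have h2 := mem_toSet.1 (h J.upper_mem_toSet) j
  exact ⟨h1.1, h2.2⟩

lemma inter_mono {J K : Brick ι} (h : J.toSet ⊆ K.toSet) : J.inter ⊆ K.inter := by
  intro x hx j
  obtain ⟨h1, h2⟩ := bounds_of_toSet_subset h j
  exact ⟨lt_of_le_of_lt h1 (hx j).1, lt_of_lt_of_le (hx j).2 h2⟩

end Brick

namespace TaggedDiv

/-- The trivial one-piece tagged division. -/
def single (J : Brick ι) (t : ι → ℝ) (ht : t ∈ J.toSet) : TaggedDiv J where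
  pieces := {(J, t)}
  subset_of_mem := by intro p hp; simp at hp; subst hp; exact subset_rfl
  tag_mem := by intro p hp; simp at hp; subst hp; exact ht
  nonoverlap := by intro p hp q hq hpq; simp at hp hq; rw [hp, hq] at hpq; exact absurd rfl hpq
  cover := by simp

lemma mem_single (J : Brick ι) (t : ι → ℝ) (ht : t ∈ J.toSet) :
    (J, t) ∈ (single J t ht).pieces := by simp [single]

/-- Glueing tagged divisions of the parts of a non-overlapping cover of `I`. -/
noncomputable def glue {κ : Type*} (I : Brick ι) (parts : Finset κ) (Jof : κ → Brick ι)
    (hsub : ∀ k ∈ parts, (Jof k).toSet ⊆ I.toSet)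
    (hno : ∀ k ∈ parts, ∀ l ∈ parts, k ≠ l → (Jof k).inter ∩ (Jof l).inter = ∅)
    (hcov : I.toSet = ⋃ k ∈ parts, (Jof k).toSet)
    (Ds : ∀ k ∈ parts, TaggedDiv (Jof k)) : TaggedDiv I where
  pieces := parts.attach.biUnion (fun k => (Ds k.1 k.2).pieces)
  subset_of_mem := by
    intro p hp
    obtain ⟨k, _, hk⟩ := Finset.mem_biUnion.1 hp
    exact ((Ds k.1 k.2).subset_of_mem p hk).trans (hsub k.1 k.2)
  tag_mem := by
    intro p hp
    obtain ⟨k, _, hk⟩ := Finset.mem_biUnion.1 hp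
    exact (Ds k.1 k.2).tag_mem p hk
  nonoverlap := by
    intro p hp q hq hpq
    obtain ⟨k, _, hk⟩ := Finset.mem_biUnion.1 hp
    obtain ⟨l, _, hl⟩ := Finset.mem_biUnion.1 hq
    by_cases hkl : k = l
    · subst hkl
      exact (Ds k.1 k.2).nonoverlap p hk q hl hpq
    · have h1 : (p.1).inter ⊆ (Jof k.1).inter :=
        Brick.inter_mono ((Ds k.1 k.2).subset_of_mem p hk)
      have h2 : (q.1).inter ⊆ (Jof l.1).inter :=
        Brick.inter_mono ((Ds l.1 l.2).subset_of_mem q hl)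
      have h3 := hno k.1 k.2 l.1 l.2 (fun h => hkl (Subtype.ext h))
      rw [Set.eq_empty_iff_forall_notMem] at h3 ⊢
      intro x hx
      exact h3 x ⟨h1 hx.1, h2 hx.2⟩
  cover := by
    rw [hcov]
    ext x
    simp only [Set.mem_iUnion, Finset.mem_biUnion]
    constructor
    · rintro ⟨k, hk, hx⟩
      have := (Ds k hk).cover
      have hx2 : x ∈ ⋃ p ∈ (Ds k hk).pieces, (p.1 : Brick ι).toSet := this ▸ hx
      simp only [Set.mem_iUnion] at hx2
      obtain ⟨p, hp, hxp⟩ := hx2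
      exact ⟨p, ⟨⟨k, hk⟩, Finset.mem_attach _ _, hp⟩, hxp⟩
    · rintro ⟨p, ⟨k, _, hk⟩, hxp⟩
      have : x ∈ ⋃ q ∈ (Ds k.1 k.2).pieces, (q.1 : Brick ι).toSet := by
        simp only [Set.mem_iUnion]; exact ⟨p, hk, hxp⟩
      rw [← (Ds k.1 k.2).cover] at this
      exact ⟨k.1, k.2, this⟩

lemma glue_compat {κ : Type*} (I : Brick ι) (parts : Finset κ) (Jof : κ → Brick ι)
    (hsub) (hno) (hcov) (Ds : ∀ k ∈ parts, TaggedDiv (Jof k)) (δ : (ι → ℝ) → ℝ)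
    (hD : ∀ k (hk : k ∈ parts), Compat (Ds k hk) δ) :
    Compat (glue I parts Jof hsub hno hcov Ds) δ := by
  intro p hp
  obtain ⟨k, _, hk⟩ := Finset.mem_biUnion.1 hp
  exact hD k.1 k.2 p hk

lemma mem_glue {κ : Type*} (I : Brick ι) (parts : Finset κ) (Jof : κ → Brick ι)
    (hsub) (hno) (hcov) (Ds : ∀ k ∈ parts, TaggedDiv (Jof k))
    {k : κ} (hk : k ∈ parts) {p} (hp : p ∈ (Ds k hk).pieces) :
    p ∈ (glue I parts Jof hsub hno hcov Ds).pieces :=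
  Finset.mem_biUnion.2 ⟨⟨k, hk⟩, Finset.mem_attach _ _, hp⟩

end TaggedDiv

end RFAux

section Cousin

variable {ι : Type*} [Fintype ι]

namespace Brick

/-- One of the `2^n` half-bricks of a brick. -/
noncomputable def half (I : Brick ι) (s : ι → Bool) : Brick ι where
  lower := fun j => if s j then I.mid j else I.lower j
  upper := fun j => if s j then I.upper j else I.mid j
  lt := fun j => by
    cases s j
    · simpa using I.lower_lt_mid j
    · simpa using I.mid_lt_upper j

lemma half_toSet_subset (I : Brick ι) (s : ι → Bool) : (I.half s).toSet ⊆ I.toSet := by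
  intro x hx j
  have h := hx j
  simp only [half] at h
  rcases Bool.dichotomy (s j) with hs | hs <;> rw [hs] at h <;> simp [Set.mem_Icc] at h
  · exact ⟨h.1, h.2.trans (I.mid_lt_upper j).le⟩
  · exact ⟨(I.lower_lt_mid j).le.trans h.1, h.2⟩

lemma half_width (I : Brick ι) (s : ι → Bool) (j : ι) :
    (I.half s).upper j - (I.half s).lower j = (I.upper j - I.lower j) / 2 := by
  simp only [half]
  cases hs : s j <;> simp [hs, mid] <;> ring

lemma half_cover (I : Brick ι) {x : ι → ℝ} (hx : x ∈ I.toSet) :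
    x ∈ (I.half (fun j => decide (I.mid j ≤ x j))).toSet := by
  intro j
  have h := hx j
  simp only [half]
  by_cases hm : I.mid j ≤ x j <;> simp [hm]
  · exact h.2
  · exact ⟨h.1, le_of_not_ge hm⟩

lemma half_nonoverlap (I : Brick ι) {s t : ι → Bool} (hst : s ≠ t) :
    (I.half s).inter ∩ (I.half t).inter = ∅ := by
  rw [Set.eq_empty_iff_forall_notMem]
  rintro x ⟨hxs, hxt⟩
  obtain ⟨j, hj⟩ := Function.ne_iff.1 hst
  have h1 := hxs j
  have h2 := hxt j
  simp only [half] at h1 h2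
  rcases Bool.dichotomy (s j) with hs | hs <;> rcases Bool.dichotomy (t j) with ht | ht <;>
    rw [hs] at h1 <;> rw [ht] at h2 <;> simp [Set.mem_Ioo] at h1 h2
  · exact hj (hs.trans ht.symm)
  · exact absurd (h1.2.trans h2.1) (lt_irrefl _)
  · exact absurd (h2.2.trans h1.1) (lt_irrefl _)
  · exact hj (hs.trans ht.symm)

end Brick

/-- Cousin's lemma: every gauge on a brick admits a compatible tagged division. -/
lemma cousin (I : Brick ι) (δ : (ι → ℝ) → ℝ) (hδ : IsGauge I δ) :
    ∃ D : TaggedDiv I, Compat D δ := by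
  by_contra hI
  set P : Brick ι → Prop := fun J => J.toSet ⊆ I.toSet ∧ ¬∃ D : TaggedDiv J, Compat D δ with hP
  have key : ∀ J : Brick ι, P J → ∃ s : ι → Bool, P (J.half s) := by
    intro J hJ
    by_contra hn
    push_neg at hn
    have hall : ∀ s : ι → Bool, ∃ D : TaggedDiv (J.half s), Compat D δ := by
      intro s
      have := hn s
      rw [hP] at this
      simp only [not_and, not_not] at this
      exact this ((J.half_toSet_subset s).trans hJ.1)
    choose Ds hDs using hall
    have hcov : J.toSet = ⋃ s ∈ (Finset.univ : Finset (ι → Bool)), (J.half s).toSet := by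
      ext x
      simp only [Set.mem_iUnion, Finset.mem_univ, exists_prop, true_and]
      constructor
      · intro hx; exact ⟨_, J.half_cover hx⟩
      · rintro ⟨s, hs⟩; exact J.half_toSet_subset s hs
    refine hJ.2 ⟨TaggedDiv.glue J Finset.univ (fun s => J.half s)
      (fun s _ => J.half_toSet_subset s)
      (fun s _ t _ hst => J.half_nonoverlap hst) hcov (fun s _ => Ds s), ?_⟩
    exact TaggedDiv.glue_compat _ _ _ _ _ _ _ _ (fun s _ => hDs s)
  have hPI : P I := ⟨subset_rfl, hI⟩
  let next : {J : Brick ι // P J} → {J : Brick ι // P J} :=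
    fun J => ⟨J.1.half (key J.1 J.2).choose, (key J.1 J.2).choose_spec⟩
  let seq : ℕ → {J : Brick ι // P J} := fun n => next^[n] ⟨I, hPI⟩
  have hseq0 : (seq 0).1 = I := rfl
  have hseq_succ : ∀ n, seq (n + 1) = next (seq n) := by
    intro n; simp only [seq, Function.iterate_succ_apply']
  have hsub_succ : ∀ n, ((seq (n+1)).1).toSet ⊆ ((seq n).1).toSet := by
    intro n; rw [hseq_succ n]; exact Brick.half_toSet_subset _ _
  have hsub : ∀ m k, ((seq (m+k)).1).toSet ⊆ ((seq m).1).toSet := by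
    intro m k
    induction k with
    | zero => exact subset_rfl
    | succ k ih => exact (hsub_succ (m+k)).trans ih
  have hwidth : ∀ n j, ((seq n).1).upper j - ((seq n).1).lower j
      = (I.upper j - I.lower j) / 2 ^ n := by
    intro n
    induction n with
    | zero => intro j; simp [hseq0]
    | succ k ih =>
      intro j
      have e : (seq (k+1)).1 = ((seq k).1).half ((key (seq k).1 (seq k).2).choose) := by
        rw [hseq_succ k]
      rw [e, Brick.half_width, ih j]
      rw [pow_succ]
      ring
  have hLU : ∀ m n j, ((seq m).1).lower j ≤ ((seq n).1).upper j := by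
    intro m n j
    rcases le_total m n with h | h
    · obtain ⟨k, rfl⟩ := Nat.exists_eq_add_of_le h
      have h2 := Brick.bounds_of_toSet_subset (hsub m k) j
      exact h2.1.trans (((seq (m+k)).1).lt j).le
    · obtain ⟨k, rfl⟩ := Nat.exists_eq_add_of_le h
      have h2 := Brick.bounds_of_toSet_subset (hsub n k) j
      exact ((((seq (n+k)).1)).lt j).le.trans h2.2
  have bdd : ∀ j, BddAbove (Set.range fun n => ((seq n).1).lower j) := by
    intro j
    exact ⟨((seq 0).1).upper j, by rintro y ⟨n, rfl⟩; exact hLU n 0 j⟩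
  set x : ι → ℝ := fun j => ⨆ n, ((seq n).1).lower j with hx
  have hx_mem : ∀ n, x ∈ ((seq n).1).toSet := by
    intro n j
    constructor
    · exact le_ciSup (bdd j) n
    · exact ciSup_le (fun m => hLU m n j)
  have hxI : x ∈ I.toSet := hseq0 ▸ hx_mem 0
  have hδx : 0 < δ x := hδ x hxI
  set W : ℝ := ∑ j, (I.upper j - I.lower j) with hW
  have hWj : ∀ j, I.upper j - I.lower j ≤ W :=
    fun j => Finset.single_le_sum (fun i _ => (sub_pos.2 (I.lt i)).le) (Finset.mem_univ j)
  obtain ⟨n, hn⟩ : ∃ n : ℕ, W / δ x < 2 ^ n := pow_unbounded_of_one_lt _ one_lt_two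
  have hpow : (0:ℝ) < 2 ^ n := by positivity
  have hWn : W / 2 ^ n < δ x := by
    rw [div_lt_iff₀ hpow]
    rw [div_lt_iff₀ hδx] at hn
    linarith [hn]
  have hball : ((seq n).1).toSet ⊆ Metric.ball x (δ x) := by
    intro y hy
    rw [Metric.mem_ball, dist_pi_lt_iff hδx]
    intro j
    have h1 := hy j
    have h2 := hx_mem n j
    have h3 := hwidth n j
    have h4 : (I.upper j - I.lower j) / 2 ^ n ≤ W / 2 ^ n := by
      gcongr; exact hWj j
    rw [Real.dist_eq, abs_sub_lt_iff]
    constructor <;> simp only [Set.mem_Icc] at h1 h2 <;> nlinarith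
  refine (seq n).2.2 ⟨TaggedDiv.single _ x (hx_mem n), ?_⟩
  intro q hq
  simp only [TaggedDiv.single, Finset.mem_singleton] at hq
  subst hq
  exact hball

end Cousin

section Basics

variable {ι : Type*} [Fintype ι]

open MeasureTheory

namespace Brick

lemma toSet_eq_pi (I : Brick ι) :
    I.toSet = Set.pi Set.univ (fun j => Set.Icc (I.lower j) (I.upper j)) := by
  ext x
  simp only [toSet, Set.mem_setOf_eq, Set.mem_pi, Set.mem_univ, true_implies]

lemma inter_eq_pi (I : Brick ι) :
    I.inter = Set.pi Set.univ (fun j => Set.Ioo (I.lower j) (I.upper j)) := by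
  ext x
  simp only [inter, Set.mem_setOf_eq, Set.mem_pi, Set.mem_univ, true_implies]

lemma volume_toSet (I : Brick ι) : volume I.toSet = ENNReal.ofReal I.vol := by
  rw [toSet_eq_pi, volume_pi_pi, vol,
    ENNReal.ofReal_prod_of_nonneg (fun j _ => (sub_pos.2 (I.lt j)).le)]
  exact Finset.prod_congr rfl (fun j _ => Real.volume_Icc)

lemma volume_inter (I : Brick ι) : volume I.inter = ENNReal.ofReal I.vol := by
  rw [inter_eq_pi, volume_pi_pi, vol,
    ENNReal.ofReal_prod_of_nonneg (fun j _ => (sub_pos.2 (I.lt j)).le)]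
  exact Finset.prod_congr rfl (fun j _ => Real.volume_Ioo)

lemma measurable_inter (I : Brick ι) : MeasurableSet I.inter := by
  rw [inter_eq_pi]
  exact MeasurableSet.univ_pi (fun j => measurableSet_Ioo)

end Brick

/-- The total volume of the pieces of a tagged division is at most the volume of the brick. -/
lemma volSum_le {I : Brick ι} (D : TaggedDiv I) :
    ∑ p ∈ D.pieces, (p.1 : Brick ι).vol ≤ I.vol := by
  have hdisj : (D.pieces : Set (Brick ι × (ι → ℝ))).PairwiseDisjoint
      (fun p => (p.1 : Brick ι).inter) := by
    intro p hp q hq hpq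
    rw [Function.onFun, Set.disjoint_iff_inter_eq_empty]
    exact D.nonoverlap p hp q hq hpq
  have hmeas : ∀ p ∈ D.pieces, MeasurableSet (p.1 : Brick ι).inter :=
    fun p _ => (p.1 : Brick ι).measurable_inter
  have h1 : ENNReal.ofReal (∑ p ∈ D.pieces, (p.1 : Brick ι).vol)
      = ∑ p ∈ D.pieces, volume (p.1 : Brick ι).inter := by
    rw [ENNReal.ofReal_sum_of_nonneg (fun p _ => (p.1 : Brick ι).vol_nonneg)]
    exact Finset.sum_congr rfl (fun p _ => ((p.1 : Brick ι).volume_inter).symm)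
  have h2 : ∑ p ∈ D.pieces, volume (p.1 : Brick ι).inter
      = volume (⋃ p ∈ D.pieces, (p.1 : Brick ι).inter) :=
    (measure_biUnion_finset hdisj hmeas).symm
  have h3 : volume (⋃ p ∈ D.pieces, (p.1 : Brick ι).inter) ≤ volume I.toSet := by
    apply measure_mono
    refine Set.iUnion₂_subset (fun p hp => ?_)
    exact ((p.1 : Brick ι).inter_subset_toSet).trans (D.subset_of_mem p hp)
  rw [← ENNReal.ofReal_le_ofReal_iff I.vol_nonneg]
  calc ENNReal.ofReal (∑ p ∈ D.pieces, (p.1 : Brick ι).vol)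
        = volume (⋃ p ∈ D.pieces, (p.1 : Brick ι).inter) := h1.trans h2
      _ ≤ volume I.toSet := h3
      _ = ENNReal.ofReal I.vol := I.volume_toSet

lemma IsGauge.min {I : Brick ι} {δ₁ δ₂ : (ι → ℝ) → ℝ} (h1 : IsGauge I δ₁)
    (h2 : IsGauge I δ₂) : IsGauge I (fun x => min (δ₁ x) (δ₂ x)) :=
  fun x hx => lt_min (h1 x hx) (h2 x hx)

lemma Compat.mono {I : Brick ι} {D : TaggedDiv I} {δ δ' : (ι → ℝ) → ℝ}
    (h : Compat D δ') (hle : ∀ x, δ' x ≤ δ x) : Compat D δ :=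
  fun p hp => (h p hp).trans (Metric.ball_subset_ball (hle p.2))

lemma tag_mem_brick {I : Brick ι} (D : TaggedDiv I) {p} (hp : p ∈ D.pieces) :
    p.2 ∈ I.toSet :=
  D.subset_of_mem p hp (D.tag_mem p hp)

lemma riemannSum_add {I : Brick ι} (f g : (ι → ℝ) → ℝ) (D : TaggedDiv I) :
    riemannSum (fun x => f x + g x) D = riemannSum f D + riemannSum g D := by
  simp [riemannSum, add_mul, Finset.sum_add_distrib]

lemma riemannSum_smul {I : Brick ι} (c : ℝ) (f : (ι → ℝ) → ℝ) (D : TaggedDiv I) :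
    riemannSum (fun x => c * f x) D = c * riemannSum f D := by
  simp [riemannSum, Finset.mul_sum, mul_assoc]

lemma HasHK.add {I : Brick ι} {f g : (ι → ℝ) → ℝ} {A B : ℝ}
    (hf : HasHK I f A) (hg : HasHK I g B) : HasHK I (fun x => f x + g x) (A + B) := by
  intro ε hε
  obtain ⟨δ₁, hδ₁, h₁⟩ := hf (ε/2) (by linarith)
  obtain ⟨δ₂, hδ₂, h₂⟩ := hg (ε/2) (by linarith)
  refine ⟨fun x => min (δ₁ x) (δ₂ x), hδ₁.min hδ₂, fun D hD => ?_⟩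
  have hD₁ : Compat D δ₁ := hD.mono (fun x => min_le_left _ _)
  have hD₂ : Compat D δ₂ := hD.mono (fun x => min_le_right _ _)
  have := h₁ D hD₁
  have := h₂ D hD₂
  rw [riemannSum_add]
  rw [abs_lt] at *
  constructor <;> linarith

lemma HasHK.smul {I : Brick ι} {f : (ι → ℝ) → ℝ} {A : ℝ} (c : ℝ)
    (hf : HasHK I f A) : HasHK I (fun x => c * f x) (c * A) := by
  intro ε hε
  obtain ⟨δ, hδ, h⟩ := hf (ε / (|c| + 1)) (by positivity)
  refine ⟨δ, hδ, fun D hD => ?_⟩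
  have h1 := h D hD
  rw [riemannSum_smul, ← mul_sub, abs_mul]
  calc |c| * |riemannSum f D - A| ≤ |c| * (ε / (|c| + 1)) := by
        apply mul_le_mul_of_nonneg_left (h1.le) (abs_nonneg c)
    _ < ε := by
        rw [div_eq_inv_mul, ← mul_assoc]
        have hc : 0 ≤ |c| := abs_nonneg c
        have : |c| * (|c| + 1)⁻¹ < 1 := by
          rw [mul_inv_lt_iff₀ (by linarith)]
          linarith
        nlinarith

lemma HasHK.zero {I : Brick ι} : HasHK I (fun _ => (0:ℝ)) 0 := by
  intro ε hε
  refine ⟨fun _ => 1, fun x _ => one_pos, fun D _ => ?_⟩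
  simp [riemannSum, hε]

lemma HasHK.congr {I : Brick ι} {f g : (ι → ℝ) → ℝ} {A : ℝ}
    (hf : HasHK I f A) (h : ∀ x, f x = g x) : HasHK I g A := by
  have : f = g := funext h
  rwa [← this]

lemma HasHK.neg {I : Brick ι} {f : (ι → ℝ) → ℝ} {A : ℝ}
    (hf : HasHK I f A) : HasHK I (fun x => -f x) (-A) := by
  have := hf.smul (-1)
  simpa using this

lemma HasHK.sub {I : Brick ι} {f g : (ι → ℝ) → ℝ} {A B : ℝ}
    (hf : HasHK I f A) (hg : HasHK I g B) : HasHK I (fun x => f x - g x) (A - B) := by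
  have := hf.add hg.neg
  simpa [sub_eq_add_neg] using this

lemma HasHK.le {I : Brick ι} {f g : (ι → ℝ) → ℝ} {A B : ℝ}
    (hf : HasHK I f A) (hg : HasHK I g B) (hle : ∀ x ∈ I.toSet, f x ≤ g x) : A ≤ B := by
  apply le_of_forall_pos_lt_add
  intro ε hε
  obtain ⟨δ₁, hδ₁, h₁⟩ := hf (ε/2) (by linarith)
  obtain ⟨δ₂, hδ₂, h₂⟩ := hg (ε/2) (by linarith)
  obtain ⟨D, hD⟩ := cousin I _ (hδ₁.min hδ₂)
  have hD₁ : Compat D δ₁ := hD.mono (fun x => min_le_left _ _)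
  have hD₂ : Compat D δ₂ := hD.mono (fun x => min_le_right _ _)
  have hs : riemannSum f D ≤ riemannSum g D := by
    apply Finset.sum_le_sum
    intro p hp
    exact mul_le_mul_of_nonneg_right (hle p.2 (tag_mem_brick D hp)) (p.1 : Brick ι).vol_nonneg
  have e1 := abs_lt.1 (h₁ D hD₁)
  have e2 := abs_lt.1 (h₂ D hD₂)
  linarith [e1.1, e2.2]

lemma HasHK.unique {I : Brick ι} {f : (ι → ℝ) → ℝ} {A B : ℝ}
    (hf : HasHK I f A) (hg : HasHK I f B) : A = B :=
  le_antisymm (hf.le hg (fun _ _ => le_rfl)) (hg.le hf (fun _ _ => le_rfl))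

lemma HasHK.nonneg {I : Brick ι} {f : (ι → ℝ) → ℝ} {A : ℝ}
    (hf : HasHK I f A) (h0 : ∀ x ∈ I.toSet, 0 ≤ f x) : 0 ≤ A :=
  HasHK.zero.le hf h0

lemma HasHK.abs_le_of_abs_le {I : Brick ι} {f w : (ι → ℝ) → ℝ} {A W : ℝ}
    (hf : HasHK I f A) (hw : HasHK I w W) (hle : ∀ x ∈ I.toSet, |f x| ≤ w x) : |A| ≤ W := by
  rw [abs_le]
  constructor
  · have := (hw.neg).le hf (fun x hx => neg_le_of_abs_le (hle x hx))
    linarith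
  · exact hf.le hw (fun x hx => le_of_abs_le (hle x hx))

/-- Completion: any partial family of `γ`-fine tagged pieces inside a division extends to
a full `γ`-fine tagged division containing it. -/
lemma exists_superdivision {I : Brick ι} (γ : (ι → ℝ) → ℝ) (hγ : IsGauge I γ)
    (D : TaggedDiv I) (S : Finset (Brick ι × (ι → ℝ))) (hS : S ⊆ D.pieces)
    (hfine : ∀ p ∈ S, (p.1 : Brick ι).toSet ⊆ Metric.ball p.2 (γ p.2)) :
    ∃ D' : TaggedDiv I, Compat D' γ ∧ S ⊆ D'.pieces := by
  have hC : ∀ p ∈ D.pieces, ∃ Dp : TaggedDiv (p.1 : Brick ι), Compat Dp γ :=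
    fun p hp => cousin p.1 γ (fun x hx => hγ x (D.subset_of_mem p hp hx))
  choose Dp hDp using hC
  let Ds : ∀ p ∈ D.pieces, TaggedDiv (p.1 : Brick ι) := fun p hp =>
    if hps : p ∈ S then TaggedDiv.single p.1 p.2 (D.tag_mem p hp) else Dp p hp
  refine ⟨TaggedDiv.glue I D.pieces Prod.fst D.subset_of_mem D.nonoverlap D.cover Ds, ?_, ?_⟩
  · apply TaggedDiv.glue_compat
    intro p hp
    by_cases hps : p ∈ S
    · simp only [Ds, dif_pos hps]
      intro q hq
      simp only [TaggedDiv.single, Finset.mem_singleton] at hq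
      subst hq
      exact hfine p hps
    · simp only [Ds, dif_neg hps]
      exact hDp p hp
  · intro p hpS
    have hp : p ∈ D.pieces := hS hpS
    have hmem : p ∈ (Ds p hp).pieces := by
      simp only [Ds, dif_pos hpS]
      exact TaggedDiv.mem_single p.1 p.2 (D.tag_mem p hp)
    exact TaggedDiv.mem_glue I D.pieces Prod.fst D.subset_of_mem D.nonoverlap D.cover Ds hp hmem

/-- Bound for partial sums of a nonnegative HK-integrable function. -/
lemma partial_sum_le_of_nonneg {I : Brick ι} {f : (ι → ℝ) → ℝ} {A : ℝ}
    (hf : HasHK I f A) (h0 : ∀ x ∈ I.toSet, 0 ≤ f x) {ε : ℝ} (hε : 0 < ε) :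
    ∃ γ, IsGauge I γ ∧ ∀ (D : TaggedDiv I) (S : Finset (Brick ι × (ι → ℝ))), S ⊆ D.pieces →
      (∀ p ∈ S, (p.1 : Brick ι).toSet ⊆ Metric.ball p.2 (γ p.2)) →
      ∑ p ∈ S, f p.2 * (p.1 : Brick ι).vol ≤ A + ε := by
  obtain ⟨γ, hγ, hγ2⟩ := hf ε hε
  refine ⟨γ, hγ, fun D S hS hfine => ?_⟩
  obtain ⟨D', hD', hSD'⟩ := exists_superdivision γ hγ D S hS hfine
  have h1 := (abs_lt.1 (hγ2 D' hD')).2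
  have h2 : ∑ p ∈ S, f p.2 * (p.1 : Brick ι).vol ≤ riemannSum f D' :=
    Finset.sum_le_sum_of_subset_of_nonneg hSD' (fun p hp _ =>
      mul_nonneg (h0 p.2 (tag_mem_brick D' hp)) (p.1 : Brick ι).vol_nonneg)
  linarith

/-- The restricted variation sum written without absolute values. -/
lemma varSum_restrict_eq {I : Brick ι} (X : Set (ι → ℝ)) (D : TaggedDiv I) :
    varSum (fun J P => if P ∈ X then J.vol else 0) D
      = ∑ p ∈ D.pieces, (if p.2 ∈ X then (p.1 : Brick ι).vol else 0) := by
  unfold varSum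
  refine Finset.sum_congr rfl (fun p _ => ?_)
  by_cases h : p.2 ∈ X <;> simp [h, abs_of_nonneg (p.1 : Brick ι).vol_nonneg]

/-- Bound for partial restricted volume sums. -/
lemma partial_varSum_le {I : Brick ι} {X : Set (ι → ℝ)} {c : ℝ} {γ : (ι → ℝ) → ℝ}
    (hγ : IsGauge I γ)
    (hc : ∀ D : TaggedDiv I, Compat D γ →
      varSum (fun J P => if P ∈ X then J.vol else 0) D ≤ c) :
    ∀ (D : TaggedDiv I) (S : Finset (Brick ι × (ι → ℝ))), S ⊆ D.pieces →
      (∀ p ∈ S, (p.1 : Brick ι).toSet ⊆ Metric.ball p.2 (γ p.2)) →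
      (∀ p ∈ S, p.2 ∈ X) →
      ∑ p ∈ S, (p.1 : Brick ι).vol ≤ c := by
  intro D S hS hfine hX
  obtain ⟨D', hD', hSD'⟩ := exists_superdivision γ hγ D S hS hfine
  have h1 := hc D' hD'
  rw [varSum_restrict_eq] at h1
  refine le_trans ?_ h1
  calc ∑ p ∈ S, (p.1 : Brick ι).vol
      = ∑ p ∈ S, (if p.2 ∈ X then (p.1 : Brick ι).vol else 0) :=
        Finset.sum_congr rfl (fun p hp => by rw [if_pos (hX p hp)])
    _ ≤ ∑ p ∈ D'.pieces, (if p.2 ∈ X then (p.1 : Brick ι).vol else 0) :=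
        Finset.sum_le_sum_of_subset_of_nonneg hSD' (fun p hp _ => by
          by_cases h : p.2 ∈ X <;> simp [h, (p.1 : Brick ι).vol_nonneg])

lemma mustar_le {I : Brick ι} {X : Set (ι → ℝ)} {c : ℝ} (γ : (ι → ℝ) → ℝ)
    (hγ : IsGauge I γ)
    (hc : ∀ D : TaggedDiv I, Compat D γ →
      varSum (fun J P => if P ∈ X then J.vol else 0) D ≤ c) :
    mustar I X ≤ ENNReal.ofReal c := by
  unfold mustar variationOn variation
  refine le_trans (iInf₂_le γ hγ) ?_
  exact iSup₂_le (fun D hD => ENNReal.ofReal_le_ofReal (hc D hD))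

lemma exists_gauge_of_mustar_lt {I : Brick ι} {X : Set (ι → ℝ)} {c : ℝ} (hcpos : 0 < c)
    (h : mustar I X < ENNReal.ofReal c) :
    ∃ γ, IsGauge I γ ∧ ∀ D : TaggedDiv I, Compat D γ →
      varSum (fun J P => if P ∈ X then J.vol else 0) D ≤ c := by
  unfold mustar variationOn variation at h
  rw [iInf_lt_iff] at h
  obtain ⟨γ, hγ⟩ := h
  rw [iInf_lt_iff] at hγ
  obtain ⟨hγ1, hγ2⟩ := hγ
  refine ⟨γ, hγ1, fun D hD => ?_⟩
  have h3 : ENNReal.ofReal (varSum (fun J P => if P ∈ X then J.vol else 0) D)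
      < ENNReal.ofReal c := lt_of_le_of_lt (le_iSup₂ (f := fun D _ =>
        ENNReal.ofReal (varSum (fun J P => if P ∈ X then J.vol else 0) D)) D hD) hγ2
  exact ((ENNReal.ofReal_lt_ofReal_iff hcpos).1 h3).le

lemma mustar_mono {I : Brick ι} {X Y : Set (ι → ℝ)} (h : X ⊆ Y) :
    mustar I X ≤ mustar I Y := by
  unfold mustar variationOn variation
  refine iInf_mono (fun δ => iInf_mono' (fun hδ => ⟨hδ, ?_⟩))
  refine iSup_mono (fun D => iSup_mono' (fun hD => ⟨hD, ?_⟩))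
  apply ENNReal.ofReal_le_ofReal
  unfold varSum
  apply Finset.sum_le_sum
  intro p _
  dsimp only
  by_cases hx : p.2 ∈ X
  · rw [if_pos hx, if_pos (h hx)]
  · rw [if_neg hx]
    simp

/-- Chebyshev inequality for the Henstock outer measure. -/
lemma chebyshev {I : Brick ι} {w : (ι → ℝ) → ℝ} {A : ℝ}
    (hw : HasHK I w A) (h0 : ∀ x, 0 ≤ w x) {a : ℝ} (ha : 0 < a) :
    mustar I {x | a ≤ w x} ≤ ENNReal.ofReal (A / a) := by
  have key : ∀ ε : ℝ, 0 < ε → mustar I {x | a ≤ w x} ≤ ENNReal.ofReal ((A + ε) / a) := by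
    intro ε hε
    obtain ⟨γ, hγ, h2⟩ := hw ε hε
    apply mustar_le γ hγ
    intro D hD
    rw [varSum_restrict_eq]
    have h3 : a * ∑ p ∈ D.pieces, (if p.2 ∈ {x | a ≤ w x} then (p.1 : Brick ι).vol else 0)
        ≤ riemannSum w D := by
      rw [Finset.mul_sum]
      apply Finset.sum_le_sum
      intro p hp
      by_cases hx : p.2 ∈ {x | a ≤ w x}
      · rw [if_pos hx]
        exact mul_le_mul_of_nonneg_right hx (p.1 : Brick ι).vol_nonneg
      · rw [if_neg hx, mul_zero]
        exact mul_nonneg (h0 p.2) (p.1 : Brick ι).vol_nonneg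
    have h4 := (abs_lt.1 (h2 D hD)).2
    rw [le_div_iff₀ ha]
    calc (∑ p ∈ D.pieces, (if p.2 ∈ {x | a ≤ w x} then (p.1 : Brick ι).vol else 0)) * a
        = a * ∑ p ∈ D.pieces, (if p.2 ∈ {x | a ≤ w x} then (p.1 : Brick ι).vol else 0) :=
          mul_comm _ _
      _ ≤ riemannSum w D := h3
      _ ≤ A + ε := by linarith
  apply ENNReal.le_of_forall_pos_le_add
  intro ε hε _
  have hε' : (0:ℝ) < a * (ε : ℝ) := mul_pos ha (by exact_mod_cast hε)
  have h5 := key (a * (ε : ℝ)) hε'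
  refine h5.trans ?_
  rw [add_div, mul_div_cancel_left₀ _ (ne_of_gt ha)]
  calc ENNReal.ofReal (A / a + ε) ≤ ENNReal.ofReal (A / a) + ENNReal.ofReal ε :=
        ENNReal.ofReal_add_le
    _ = ENNReal.ofReal (A / a) + ε := by rw [ENNReal.ofReal_coe_nnreal]

end Basics

section Subadd

variable {ι : Type*} [Fintype ι]

lemma geom_partial (s : Finset ℕ) : ∑ m ∈ s, ((1:ℝ)/2)^(m+1) ≤ 1 := by
  have h1 : s ⊆ Finset.range (s.sup id + 1) :=
    fun m hm => Finset.mem_range.2 (Nat.lt_succ_of_le (Finset.le_sup (f := id) hm))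
  have h2 : ∀ n : ℕ, ∑ m ∈ Finset.range n, ((1:ℝ)/2)^(m+1) = 1 - ((1:ℝ)/2)^n := by
    intro n
    induction n with
    | zero => simp
    | succ k ih =>
      rw [Finset.sum_range_succ, ih, pow_succ]
      ring
  calc ∑ m ∈ s, ((1:ℝ)/2)^(m+1)
      ≤ ∑ m ∈ Finset.range (s.sup id + 1), ((1:ℝ)/2)^(m+1) :=
        Finset.sum_le_sum_of_subset_of_nonneg h1 (fun _ _ _ => by positivity)
    _ = 1 - ((1:ℝ)/2)^(s.sup id + 1) := h2 _
    _ ≤ 1 := by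
        have : (0:ℝ) ≤ ((1:ℝ)/2)^(s.sup id + 1) := by positivity
        linarith

/-- Core countable subadditivity estimate for `mustar`. -/
lemma mustar_iUnion_le_core {I : Brick ι} (X : ℕ → Set (ι → ℝ)) (c : ℕ → ℝ) (Cs : ℝ)
    (hc : ∀ m, 0 < c m)
    (hm : ∀ m, mustar I (X m) < ENNReal.ofReal (c m))
    (hs : ∀ s : Finset ℕ, ∑ m ∈ s, c m ≤ Cs) :
    mustar I (⋃ m, X m) ≤ ENNReal.ofReal Cs := by
  have hγ : ∀ m, ∃ γ, IsGauge I γ ∧ ∀ D : TaggedDiv I, Compat D γ →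
      varSum (fun J P => if P ∈ X m then J.vol else 0) D ≤ c m :=
    fun m => exists_gauge_of_mustar_lt (hc m) (hm m)
  choose γ hγ1 hγ2 using hγ
  set U : Set (ι → ℝ) := ⋃ m, X m with hU
  let mfun : (ι → ℝ) → ℕ := fun x => if h : ∃ m, x ∈ X m then Nat.find h else 0
  have hmfun : ∀ x, x ∈ U → x ∈ X (mfun x) := by
    intro x hx
    rw [Set.mem_iUnion] at hx
    simp only [mfun, dif_pos hx]
    exact Nat.find_spec hx
  set δ : (ι → ℝ) → ℝ := fun x => if x ∈ U then γ (mfun x) x else 1 with hδdef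
  have hδ : IsGauge I δ := by
    intro x hx
    by_cases hxU : x ∈ U
    · simp only [hδdef, if_pos hxU]
      exact hγ1 (mfun x) x hx
    · simp only [hδdef, if_neg hxU]
      exact one_pos
  apply mustar_le δ hδ
  intro D hD
  rw [varSum_restrict_eq]
  set T : Finset (Brick ι × (ι → ℝ)) := D.pieces.filter (fun p => p.2 ∈ U) with hT
  have e1 : ∑ p ∈ D.pieces, (if p.2 ∈ U then (p.1 : Brick ι).vol else 0)
      = ∑ p ∈ T, (p.1 : Brick ι).vol := by
    rw [hT, Finset.sum_filter]
  rw [e1]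
  set ms : Finset ℕ := T.image (fun p => mfun p.2) with hms
  have e2 : ∑ p ∈ T, (p.1 : Brick ι).vol
      = ∑ m ∈ ms, ∑ p ∈ T.filter (fun p => mfun p.2 = m), (p.1 : Brick ι).vol := by
    rw [Finset.sum_fiberwise_of_maps_to (fun p hp => Finset.mem_image_of_mem _ hp)]
  rw [e2]
  have e3 : ∀ m ∈ ms, ∑ p ∈ T.filter (fun p => mfun p.2 = m), (p.1 : Brick ι).vol ≤ c m := by
    intro m _
    apply partial_varSum_le (hγ1 m) (hγ2 m) D
    · intro p hp
      exact Finset.mem_of_mem_filter _ (Finset.mem_of_mem_filter _ hp)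
    · intro p hp
      rw [Finset.mem_filter] at hp
      obtain ⟨hpT, hpm⟩ := hp
      rw [hT, Finset.mem_filter] at hpT
      have hfine := hD p hpT.1
      have : δ p.2 = γ m p.2 := by
        simp only [hδdef, if_pos hpT.2, hpm]
      rwa [this] at hfine
    · intro p hp
      rw [Finset.mem_filter] at hp
      obtain ⟨hpT, hpm⟩ := hp
      rw [hT, Finset.mem_filter] at hpT
      rw [← hpm]
      exact hmfun p.2 hpT.2
  calc ∑ m ∈ ms, ∑ p ∈ T.filter (fun p => mfun p.2 = m), (p.1 : Brick ι).vol
      ≤ ∑ m ∈ ms, c m := Finset.sum_le_sum e3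
    _ ≤ Cs := hs ms

/-- Countable subadditivity of `mustar` with explicit bounds. -/
lemma mustar_iUnion_le {I : Brick ι} (X : ℕ → Set (ι → ℝ)) (c : ℕ → ℝ) (Cs : ℝ)
    (hc : ∀ m, 0 ≤ c m)
    (hm : ∀ m, mustar I (X m) ≤ ENNReal.ofReal (c m))
    (hs : ∀ s : Finset ℕ, ∑ m ∈ s, c m ≤ Cs) :
    mustar I (⋃ m, X m) ≤ ENNReal.ofReal Cs := by
  apply ENNReal.le_of_forall_pos_le_add
  intro ε hε _
  have hε' : (0:ℝ) < (ε : ℝ) := by exact_mod_cast hε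
  have key := mustar_iUnion_le_core X (fun m => c m + (ε : ℝ) * ((1:ℝ)/2)^(m+1)) (Cs + ε)
    (fun m => by
      have h2 : (0:ℝ) < (ε : ℝ) * ((1:ℝ)/2)^(m+1) := mul_pos hε' (by positivity)
      linarith [hc m])
    (fun m => lt_of_le_of_lt (hm m) (by
      apply ENNReal.ofReal_lt_ofReal_iff_of_nonneg (hc m) |>.2
      have : (0:ℝ) < (ε : ℝ) * ((1:ℝ)/2)^(m+1) := mul_pos hε' (by positivity)
      linarith))
    (fun s => by
      rw [Finset.sum_add_distrib]
      have h1 := hs s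
      have h2 : ∑ m ∈ s, (ε : ℝ) * ((1:ℝ)/2)^(m+1) ≤ ε := by
        rw [← Finset.mul_sum]
        calc (ε : ℝ) * ∑ m ∈ s, ((1:ℝ)/2)^(m+1) ≤ (ε : ℝ) * 1 :=
              mul_le_mul_of_nonneg_left (geom_partial s) hε'.le
          _ = ε := mul_one _
      linarith)
  refine key.trans ?_
  calc ENNReal.ofReal (Cs + ε) ≤ ENNReal.ofReal Cs + ENNReal.ofReal (ε : ℝ) :=
        ENNReal.ofReal_add_le
    _ = ENNReal.ofReal Cs + ε := by rw [ENNReal.ofReal_coe_nnreal]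

/-- A countable union of null sets is null. -/
lemma mustar_iUnion_null {I : Brick ι} (X : ℕ → Set (ι → ℝ))
    (hm : ∀ m, mustar I (X m) = 0) : mustar I (⋃ m, X m) = 0 := by
  have := mustar_iUnion_le (I := I) X (fun _ => 0) 0 (fun _ => le_rfl)
    (fun m => by rw [hm m]; simp) (fun s => by simp)
  simpa using this

/-- Riemann sums of a function supported on a null set are arbitrarily small. -/
lemma riemannSum_null_small {I : Brick ι} {N : Set (ι → ℝ)} (hN : mustar I N = 0)
    (φ : (ι → ℝ) → ℝ) (hφ : ∀ x, x ∉ N → φ x = 0) {ε : ℝ} (hε : 0 < ε) :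
    ∃ δ, IsGauge I δ ∧ ∀ D : TaggedDiv I, Compat D δ →
      ∑ p ∈ D.pieces, |φ p.2| * (p.1 : Brick ι).vol ≤ ε := by
  set NL : ℕ → Set (ι → ℝ) := fun ℓ => {x | φ x ≠ 0 ∧ (ℓ:ℝ) ≤ |φ x| ∧ |φ x| < (ℓ:ℝ) + 1}
    with hNL
  have hNLnull : ∀ ℓ, mustar I (NL ℓ) = 0 := by
    intro ℓ
    have hsub : NL ℓ ⊆ N := by
      intro x hx
      by_contra hxN
      exact hx.1 (hφ x hxN)
    exact le_antisymm ((mustar_mono hsub).trans hN.le) zero_le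
  set c : ℕ → ℝ := fun ℓ => ε * ((1:ℝ)/2)^(ℓ+1) / ((ℓ:ℝ) + 1) with hcdef
  have hcpos : ∀ ℓ, 0 < c ℓ := by
    intro ℓ
    have h1 : (0:ℝ) < (ℓ:ℝ) + 1 := by positivity
    have h2 : (0:ℝ) < ((1:ℝ)/2)^(ℓ+1) := by positivity
    exact div_pos (mul_pos hε h2) h1
  have hmlt : ∀ ℓ, mustar I (NL ℓ) < ENNReal.ofReal (c ℓ) := by
    intro ℓ
    rw [hNLnull ℓ]
    exact ENNReal.ofReal_pos.2 (hcpos ℓ)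
  have hγ := fun ℓ => exists_gauge_of_mustar_lt (hcpos ℓ) (hmlt ℓ)
  choose γ hγ1 hγ2 using hγ
  set δ : (ι → ℝ) → ℝ := fun x => if φ x ≠ 0 then γ (Nat.floor |φ x|) x else 1 with hδdef
  have hδ : IsGauge I δ := by
    intro x hx
    by_cases hx0 : φ x ≠ 0
    · simp only [hδdef, if_pos hx0]
      exact hγ1 _ x hx
    · simp only [hδdef, if_neg hx0]
      exact one_pos
  refine ⟨δ, hδ, fun D hD => ?_⟩
  set T : Finset (Brick ι × (ι → ℝ)) := D.pieces.filter (fun p => φ p.2 ≠ 0) with hT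
  have e1 : ∑ p ∈ D.pieces, |φ p.2| * (p.1 : Brick ι).vol
      = ∑ p ∈ T, |φ p.2| * (p.1 : Brick ι).vol := by
    rw [hT, Finset.sum_filter]
    refine Finset.sum_congr rfl (fun p _ => ?_)
    by_cases h : φ p.2 ≠ 0
    · rw [if_pos h]
    · rw [if_neg h]
      push_neg at h
      rw [h]
      simp
  rw [e1]
  set ms : Finset ℕ := T.image (fun p => Nat.floor |φ p.2|) with hms
  have e2 : ∑ p ∈ T, |φ p.2| * (p.1 : Brick ι).vol
      = ∑ ℓ ∈ ms, ∑ p ∈ T.filter (fun p => Nat.floor |φ p.2| = ℓ),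
          |φ p.2| * (p.1 : Brick ι).vol := by
    rw [Finset.sum_fiberwise_of_maps_to (fun p hp => Finset.mem_image_of_mem _ hp)]
  rw [e2]
  have e3 : ∀ ℓ ∈ ms, ∑ p ∈ T.filter (fun p => Nat.floor |φ p.2| = ℓ),
      |φ p.2| * (p.1 : Brick ι).vol ≤ ε * ((1:ℝ)/2)^(ℓ+1) := by
    intro ℓ _
    have hmemNL : ∀ p ∈ T.filter (fun p => Nat.floor |φ p.2| = ℓ), p.2 ∈ NL ℓ := by
      intro p hp
      rw [Finset.mem_filter] at hp
      obtain ⟨hpT, hpℓ⟩ := hp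
      rw [hT, Finset.mem_filter] at hpT
      refine ⟨hpT.2, ?_, ?_⟩
      · rw [← hpℓ]
        exact Nat.floor_le (abs_nonneg _)
      · rw [← hpℓ]
        exact Nat.lt_floor_add_one _
    have hvol : ∑ p ∈ T.filter (fun p => Nat.floor |φ p.2| = ℓ), (p.1 : Brick ι).vol
        ≤ c ℓ := by
      apply partial_varSum_le (hγ1 ℓ) (hγ2 ℓ) D
      · intro p hp
        exact Finset.mem_of_mem_filter _ (Finset.mem_of_mem_filter _ hp)
      · intro p hp
        have hpNL := hmemNL p hp
        rw [Finset.mem_filter] at hp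
        obtain ⟨hpT, hpℓ⟩ := hp
        rw [hT, Finset.mem_filter] at hpT
        have hfine := hD p hpT.1
        have : δ p.2 = γ ℓ p.2 := by
          simp only [hδdef, if_pos hpT.2, hpℓ]
        rwa [this] at hfine
      · exact hmemNL
    calc ∑ p ∈ T.filter (fun p => Nat.floor |φ p.2| = ℓ), |φ p.2| * (p.1 : Brick ι).vol
        ≤ ∑ p ∈ T.filter (fun p => Nat.floor |φ p.2| = ℓ),
            ((ℓ:ℝ) + 1) * (p.1 : Brick ι).vol := by
          apply Finset.sum_le_sum
          intro p hp
          exact mul_le_mul_of_nonneg_right (hmemNL p hp).2.2.le (p.1 : Brick ι).vol_nonneg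
      _ = ((ℓ:ℝ) + 1) * ∑ p ∈ T.filter (fun p => Nat.floor |φ p.2| = ℓ),
            (p.1 : Brick ι).vol := by rw [Finset.mul_sum]
      _ ≤ ((ℓ:ℝ) + 1) * c ℓ := by
          apply mul_le_mul_of_nonneg_left hvol (by positivity)
      _ = ε * ((1:ℝ)/2)^(ℓ+1) := by
          rw [hcdef]
          field_simp
  calc ∑ ℓ ∈ ms, ∑ p ∈ T.filter (fun p => Nat.floor |φ p.2| = ℓ),
        |φ p.2| * (p.1 : Brick ι).vol
      ≤ ∑ ℓ ∈ ms, ε * ((1:ℝ)/2)^(ℓ+1) := Finset.sum_le_sum e3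
    _ = ε * ∑ ℓ ∈ ms, ((1:ℝ)/2)^(ℓ+1) := by rw [Finset.mul_sum]
    _ ≤ ε * 1 := mul_le_mul_of_nonneg_left (geom_partial ms) hε.le
    _ = ε := mul_one _

/-- The HK integral is invariant under modification on a null set. -/
lemma HasHK.congr_null {I : Brick ι} {N : Set (ι → ℝ)} (hN : mustar I N = 0)
    {f g : (ι → ℝ) → ℝ} {A : ℝ} (hfg : ∀ x, x ∉ N → f x = g x)
    (hf : HasHK I f A) : HasHK I g A := by
  intro ε hε
  obtain ⟨δ₁, hδ₁, h₁⟩ := hf (ε/2) (by linarith)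
  obtain ⟨δ₂, hδ₂, h₂⟩ := riemannSum_null_small hN (fun x => g x - f x)
    (fun x hx => sub_eq_zero.2 (hfg x hx).symm) (show (0:ℝ) < ε/4 by linarith)
  refine ⟨fun x => min (δ₁ x) (δ₂ x), hδ₁.min hδ₂, fun D hD => ?_⟩
  have hD₁ : Compat D δ₁ := hD.mono (fun x => min_le_left _ _)
  have hD₂ : Compat D δ₂ := hD.mono (fun x => min_le_right _ _)
  have e1 : |riemannSum g D - riemannSum f D| ≤ ε/4 := by
    have : riemannSum g D - riemannSum f D
        = ∑ p ∈ D.pieces, (g p.2 - f p.2) * (p.1 : Brick ι).vol := by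
      unfold riemannSum
      rw [← Finset.sum_sub_distrib]
      exact Finset.sum_congr rfl (fun p _ => by ring)
    rw [this]
    calc |∑ p ∈ D.pieces, (g p.2 - f p.2) * (p.1 : Brick ι).vol|
        ≤ ∑ p ∈ D.pieces, |(g p.2 - f p.2) * (p.1 : Brick ι).vol| :=
          Finset.abs_sum_le_sum_abs _ _
      _ = ∑ p ∈ D.pieces, |g p.2 - f p.2| * (p.1 : Brick ι).vol := by
          refine Finset.sum_congr rfl (fun p _ => ?_)
          rw [abs_mul, abs_of_nonneg (p.1 : Brick ι).vol_nonneg]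
      _ ≤ ε/4 := h₂ D hD₂
  have e2 := h₁ D hD₁
  rw [abs_lt] at e2 ⊢
  rw [abs_le] at e1
  constructor <;> linarith [e1.1, e1.2, e2.1, e2.2]

end Subadd

section RpowTools

lemma rpow_add_le {p : ℝ} (hp : 0 < p) {x y θ : ℝ} (hx : 0 ≤ x) (hy : 0 ≤ y) (hθ : 0 < θ) :
    (x + y) ^ p ≤ (1+θ)^p * x^p + ((1+θ)/θ)^p * y^p := by
  have hxp : (0:ℝ) ≤ x^p := Real.rpow_nonneg hx p
  have hyp : (0:ℝ) ≤ y^p := Real.rpow_nonneg hy p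
  have h1θ : (0:ℝ) ≤ 1 + θ := by linarith
  rcases le_or_gt y (θ * x) with hc | hc
  · have h1 : x + y ≤ (1+θ) * x := by nlinarith
    have h2 : (x+y)^p ≤ ((1+θ)*x)^p :=
      Real.rpow_le_rpow (by linarith) h1 hp.le
    rw [Real.mul_rpow h1θ hx] at h2
    have h3 : (0:ℝ) ≤ ((1+θ)/θ)^p * y^p :=
      mul_nonneg (Real.rpow_nonneg (by positivity) p) hyp
    linarith
  · have h1 : x + y ≤ ((1+θ)/θ) * y := by
      rw [div_mul_eq_mul_div, le_div_iff₀ hθ]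
      nlinarith
    have h2 : (x+y)^p ≤ (((1+θ)/θ)*y)^p :=
      Real.rpow_le_rpow (by linarith) h1 hp.le
    rw [Real.mul_rpow (by positivity) hy] at h2
    have h3 : (0:ℝ) ≤ (1+θ)^p * x^p :=
      mul_nonneg (Real.rpow_nonneg h1θ p) hxp
    linarith

lemma rpow_add_le_two {p : ℝ} (hp : 0 < p) {x y : ℝ} (hx : 0 ≤ x) (hy : 0 ≤ y) :
    (x + y)^p ≤ 2^p * x^p + 2^p * y^p := by
  have := rpow_add_le hp hx hy one_pos
  norm_num at this
  linarith

lemma one_le_rpow_one_add {p θ : ℝ} (hp : 0 ≤ p) (hθ : 0 ≤ θ) : (1:ℝ) ≤ (1+θ)^p := by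
  calc (1:ℝ) = (1+θ)^(0:ℝ) := by rw [Real.rpow_zero]
    _ ≤ (1+θ)^p := Real.rpow_le_rpow_of_exponent_le (by linarith) hp

lemma abs_rpow_sub_le {p : ℝ} (hp : 0 < p) {θ : ℝ} (hθ : 0 < θ) (a b : ℝ) :
    |a|^p - |b|^p ≤ ((1+θ)^p - 1) * (|a|^p + |b|^p) + ((1+θ)/θ)^p * |a-b|^p := by
  have h1 : |a| ≤ |b| + |a-b| := by
    have := abs_sub_abs_le_abs_sub a b
    linarith
  have h2 : |a|^p ≤ (|b| + |a-b|)^p :=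
    Real.rpow_le_rpow (abs_nonneg a) h1 hp.le
  have h3 := rpow_add_le hp (abs_nonneg b) (abs_nonneg (a-b)) hθ
  have h4 : (1:ℝ) ≤ (1+θ)^p := one_le_rpow_one_add hp.le hθ.le
  have h5 : (0:ℝ) ≤ |a|^p := Real.rpow_nonneg (abs_nonneg a) p
  have h6 : (0:ℝ) ≤ |b|^p := Real.rpow_nonneg (abs_nonneg b) p
  nlinarith

lemma abs_abs_rpow_sub_le {p : ℝ} (hp : 0 < p) {θ : ℝ} (hθ : 0 < θ) (a b : ℝ) :
    abs (|a|^p - |b|^p) ≤ ((1+θ)^p - 1) * (|a|^p + |b|^p) + ((1+θ)/θ)^p * |a-b|^p := by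
  rw [abs_le]
  constructor
  · have := abs_rpow_sub_le hp hθ b a
    rw [abs_sub_comm b a] at this
    linarith
  · exact abs_rpow_sub_le hp hθ a b

lemma exists_theta {p : ℝ} (hp : 0 < p) {ζ : ℝ} (hζ : 0 < ζ) :
    ∃ θ : ℝ, 0 < θ ∧ (1+θ)^p = 1 + ζ := by
  refine ⟨(1+ζ)^(1/p) - 1, ?_, ?_⟩
  · have h1 : (1:ℝ) < (1+ζ)^(1/p) := by
      rw [Real.one_lt_rpow_iff_of_pos (by linarith)]
      left
      exact ⟨by linarith, by positivity⟩
    linarith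
  · have h0 : (0:ℝ) ≤ 1 + ζ := by linarith
    rw [show (1:ℝ) + ((1+ζ)^(1/p) - 1) = (1+ζ)^(1/p) by ring]
    rw [← Real.rpow_mul h0]
    rw [one_div_mul_cancel (ne_of_gt hp), Real.rpow_one]

end RpowTools

section KeyLemma

variable {ι : Type*} [Fintype ι]

lemma abs_sub_le_sum_Ico {u w : ℕ → ℝ} (hdom : ∀ k, |u (k+1) - u k| ≤ w k)
    {M m : ℕ} (h : M ≤ m) : |u m - u M| ≤ ∑ k ∈ Finset.Ico M m, w k := by
  induction m, h using Nat.le_induction with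
  | base => simp
  | succ m hMm ih =>
    have h1 := hdom m
    have h2 : |u (m+1) - u M| ≤ |u (m+1) - u m| + |u m - u M| := by
      have := abs_sub_le (u (m+1)) (u m) (u M)
      linarith
    rw [Finset.sum_Ico_succ_top hMm]
    linarith

/-- Main convergence lemma: a pointwise limit of HK-integrable functions with summable
dominated increments is HK-integrable with the limit integral. -/
lemma key_convergence {I : Brick ι}
    (u : ℕ → (ι → ℝ) → ℝ) (a : ℕ → ℝ) (w : ℕ → (ι → ℝ) → ℝ) (W τ : ℕ → ℝ)
    (h : (ι → ℝ) → ℝ)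
    (hu : ∀ m, HasHK I (u m) (a m))
    (hw : ∀ m, HasHK I (w m) (W m))
    (hw0 : ∀ m x, 0 ≤ w m x)
    (hWτ : ∀ m, W m ≤ τ m)
    (hdom : ∀ m x, |u (m+1) x - u m x| ≤ w m x)
    (hτ0 : ∀ m, 0 ≤ τ m)
    (hτ : Summable τ)
    (hlim : ∀ x, Filter.Tendsto (fun m => u m x) Filter.atTop (nhds (h x))) :
    ∃ A, Filter.Tendsto a Filter.atTop (nhds A) ∧ HasHK I h A := by
  -- the sequence of integrals is Cauchy
  have hstep : ∀ m, dist (a m) (a (m+1)) ≤ τ m := by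
    intro m
    rw [Real.dist_eq, abs_sub_comm]
    refine le_trans (HasHK.abs_le_of_abs_le ((hu (m+1)).sub (hu m)) (hw m) ?_) (hWτ m)
    intro x _
    exact hdom m x
  have hcauchy : CauchySeq a := cauchySeq_of_dist_le_of_summable τ hstep hτ
  obtain ⟨A, hA⟩ := cauchySeq_tendsto_of_complete hcauchy
  have hdistA : ∀ M, dist (a M) A ≤ ∑' k, τ (M + k) :=
    dist_le_tsum_of_dist_le_of_tendsto τ hstep hτ hA
  -- tails of τ tend to zero
  have htail0 : Filter.Tendsto (fun M => ∑' i, τ (i + M)) Filter.atTop (nhds 0) :=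
    _root_.tendsto_sum_nat_add τ
  refine ⟨A, hA, ?_⟩
  intro ε hε
  have hvol := I.vol_pos
  set ε' : ℝ := ε / (I.vol + 8) with hε'def
  have hε'pos : 0 < ε' := by
    apply div_pos hε
    linarith
  -- choose M with small tail
  obtain ⟨M, hM⟩ : ∃ M, ∑' i, τ (i + M) ≤ ε' := by
    have := htail0.eventually_lt_const hε'pos
    obtain ⟨M, hM⟩ := this.exists
    exact ⟨M, hM.le⟩
  have hMtail : ∑' k, τ (M + k) ≤ ε' := by
    refine le_trans (le_of_eq (tsum_congr (fun k => by rw [add_comm]))) hM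
  -- gauges
  obtain ⟨δ₀, hδ₀, hδ₀2⟩ := hu M ε' hε'pos
  have hpw : ∀ k, ∃ γ, IsGauge I γ ∧
      ∀ (D : TaggedDiv I) (S : Finset (Brick ι × (ι → ℝ))), S ⊆ D.pieces →
      (∀ p ∈ S, (p.1 : Brick ι).toSet ⊆ Metric.ball p.2 (γ p.2)) →
      ∑ p ∈ S, w k p.2 * (p.1 : Brick ι).vol ≤ W k + ε' * ((1:ℝ)/2)^(k+1) :=
    fun k => partial_sum_le_of_nonneg (hw k) (fun x _ => hw0 k x)
      (by positivity)
  choose γ hγ1 hγ2 using hpw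
  -- pointwise approximation index
  have hmx : ∀ x, ∃ m, M ≤ m ∧ |u m x - h x| ≤ ε' := by
    intro x
    have := (hlim x).eventually (Metric.ball_mem_nhds (h x) hε'pos)
    rw [Filter.eventually_atTop] at this
    obtain ⟨m₀, hm₀⟩ := this
    refine ⟨max M m₀, le_max_left _ _, ?_⟩
    have := hm₀ (max M m₀) (le_max_right _ _)
    rw [Real.dist_eq] at this
    exact this.le
  choose mx hmx1 hmx2 using hmx
  -- the combined gauge
  have hne : ∀ x, (Finset.Icc M (mx x)).Nonempty := fun x => Finset.nonempty_Icc.2 (hmx1 x)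
  set δ : (ι → ℝ) → ℝ := fun x =>
    min (δ₀ x) ((Finset.Icc M (mx x)).inf' (hne x) (fun k => γ k x)) with hδdef
  have hδ : IsGauge I δ := by
    intro x hx
    apply lt_min (hδ₀ x hx)
    rw [Finset.lt_inf'_iff]
    intro k _
    exact hγ1 k x hx
  refine ⟨δ, hδ, fun D hD => ?_⟩
  have hDδ₀ : Compat D δ₀ := hD.mono (fun x => min_le_left _ _)
  -- the pointwise estimate at tags
  have hpoint : ∀ p ∈ D.pieces,
      |h p.2 - u M p.2| ≤ ε' + ∑ k ∈ Finset.Ico M (mx p.2), w k p.2 := by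
    intro p _
    have h1 := hmx2 p.2
    have h2 : |u (mx p.2) p.2 - u M p.2| ≤ ∑ k ∈ Finset.Ico M (mx p.2), w k p.2 :=
      abs_sub_le_sum_Ico (u := fun m => u m p.2) (fun k => hdom k p.2) (hmx1 p.2)
    have h3 : |h p.2 - u M p.2| ≤ |u (mx p.2) p.2 - h p.2| + |u (mx p.2) p.2 - u M p.2| := by
      have := abs_sub_le (h p.2) (u (mx p.2) p.2) (u M p.2)
      rw [abs_sub_comm (h p.2) (u (mx p.2) p.2)] at this
      linarith
    linarith
  -- the main splitting
  have hsplit : |riemannSum h D - riemannSum (u M) D|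
      ≤ ε' * I.vol + ∑ p ∈ D.pieces, (∑ k ∈ Finset.Ico M (mx p.2), w k p.2)
          * (p.1 : Brick ι).vol := by
    have e0 : riemannSum h D - riemannSum (u M) D
        = ∑ p ∈ D.pieces, (h p.2 - u M p.2) * (p.1 : Brick ι).vol := by
      unfold riemannSum
      rw [← Finset.sum_sub_distrib]
      exact Finset.sum_congr rfl (fun p _ => by ring)
    rw [e0]
    calc |∑ p ∈ D.pieces, (h p.2 - u M p.2) * (p.1 : Brick ι).vol|
        ≤ ∑ p ∈ D.pieces, |(h p.2 - u M p.2) * (p.1 : Brick ι).vol| :=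
          Finset.abs_sum_le_sum_abs _ _
      _ = ∑ p ∈ D.pieces, |h p.2 - u M p.2| * (p.1 : Brick ι).vol := by
          exact Finset.sum_congr rfl (fun p _ => by
            rw [abs_mul, abs_of_nonneg (p.1 : Brick ι).vol_nonneg])
      _ ≤ ∑ p ∈ D.pieces, (ε' + ∑ k ∈ Finset.Ico M (mx p.2), w k p.2)
            * (p.1 : Brick ι).vol := by
          apply Finset.sum_le_sum
          intro p hp
          exact mul_le_mul_of_nonneg_right (hpoint p hp) (p.1 : Brick ι).vol_nonneg
      _ = ε' * (∑ p ∈ D.pieces, (p.1 : Brick ι).vol)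
            + ∑ p ∈ D.pieces, (∑ k ∈ Finset.Ico M (mx p.2), w k p.2)
              * (p.1 : Brick ι).vol := by
          rw [Finset.mul_sum, ← Finset.sum_add_distrib]
          exact (Finset.sum_congr rfl (fun p _ => by ring))
      _ ≤ ε' * I.vol + ∑ p ∈ D.pieces, (∑ k ∈ Finset.Ico M (mx p.2), w k p.2)
            * (p.1 : Brick ι).vol := by
          have := volSum_le D
          have h4 : ε' * (∑ p ∈ D.pieces, (p.1 : Brick ι).vol) ≤ ε' * I.vol :=
            mul_le_mul_of_nonneg_left this hε'pos.le
          linarith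
  -- regroup the double sum by k
  set Kmax : ℕ := (D.pieces.sup (fun p => mx p.2)) with hKmax
  have hmxle : ∀ p ∈ D.pieces, mx p.2 ≤ Kmax := fun p hp => Finset.le_sup (f := fun p => mx p.2) hp
  have hregroup : ∑ p ∈ D.pieces, (∑ k ∈ Finset.Ico M (mx p.2), w k p.2)
      * (p.1 : Brick ι).vol
      = ∑ k ∈ Finset.Ico M Kmax, ∑ p ∈ D.pieces.filter (fun p => k < mx p.2),
          w k p.2 * (p.1 : Brick ι).vol := by
    have e1 : ∀ p ∈ D.pieces, (∑ k ∈ Finset.Ico M (mx p.2), w k p.2) * (p.1 : Brick ι).vol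
        = ∑ k ∈ Finset.Ico M Kmax, (if k < mx p.2 then w k p.2 * (p.1 : Brick ι).vol else 0) := by
      intro p hp
      rw [← Finset.sum_filter]
      have e2 : (Finset.Ico M Kmax).filter (fun k => k < mx p.2) = Finset.Ico M (mx p.2) := by
        ext k
        simp only [Finset.mem_filter, Finset.mem_Ico]
        constructor
        · rintro ⟨⟨h1, _⟩, h3⟩; exact ⟨h1, h3⟩
        · rintro ⟨h1, h2⟩; exact ⟨⟨h1, lt_of_lt_of_le h2 (hmxle p hp)⟩, h2⟩
      rw [e2, Finset.sum_mul]
    rw [Finset.sum_congr rfl e1, Finset.sum_comm]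
    exact Finset.sum_congr rfl (fun k _ => by rw [Finset.sum_filter])
  -- bound each k-group
  have hgroup : ∀ k ∈ Finset.Ico M Kmax,
      ∑ p ∈ D.pieces.filter (fun p => k < mx p.2), w k p.2 * (p.1 : Brick ι).vol
        ≤ τ k + ε' * ((1:ℝ)/2)^(k+1) := by
    intro k hk
    rw [Finset.mem_Ico] at hk
    have hb := hγ2 k D (D.pieces.filter (fun p => k < mx p.2))
      (Finset.filter_subset _ _) ?_
    · linarith [hWτ k, hb]
    · intro p hp
      rw [Finset.mem_filter] at hp
      have hfine := hD p hp.1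
      have hle : δ p.2 ≤ γ k p.2 := by
        refine le_trans (min_le_right _ _) ?_
        exact Finset.inf'_le _ (Finset.mem_Icc.2 ⟨hk.1, hp.2.le⟩)
      exact hfine.trans (Metric.ball_subset_ball hle)
  -- sum the group bounds
  have hsum2 : ∑ k ∈ Finset.Ico M Kmax, (τ k + ε' * ((1:ℝ)/2)^(k+1)) ≤ ε' + ε' := by
    rw [Finset.sum_add_distrib]
    have hτsum : ∑ k ∈ Finset.Ico M Kmax, τ k ≤ ε' := by
      rw [Finset.sum_Ico_eq_sum_range]
      have hsummable : Summable (fun i => τ (M + i)) := by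
        have : (fun i => τ (M + i)) = (fun i => τ (i + M)) := by
          funext i; rw [add_comm]
        rw [this]
        exact (summable_nat_add_iff M).2 hτ
      refine le_trans ?_ hMtail
      exact Summable.sum_le_tsum (Finset.range (Kmax - M)) (fun i _ => hτ0 _) hsummable
    have hgsum : ∑ k ∈ Finset.Ico M Kmax, ε' * ((1:ℝ)/2)^(k+1) ≤ ε' := by
      rw [← Finset.mul_sum]
      calc ε' * ∑ k ∈ Finset.Ico M Kmax, ((1:ℝ)/2)^(k+1) ≤ ε' * 1 :=
            mul_le_mul_of_nonneg_left (geom_partial _) hε'pos.le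
        _ = ε' := mul_one _
    linarith
  -- final assembly
  have hE2 := hδ₀2 D hDδ₀
  have hE3 : |a M - A| ≤ ε' := by
    have := hdistA M
    rw [Real.dist_eq] at this
    linarith [hMtail]
  have hdouble : ∑ p ∈ D.pieces, (∑ k ∈ Finset.Ico M (mx p.2), w k p.2)
      * (p.1 : Brick ι).vol ≤ ε' + ε' := by
    rw [hregroup]
    exact le_trans (Finset.sum_le_sum hgroup) hsum2
  have hfinal : |riemannSum h D - A| ≤ ε' * I.vol + 4 * ε' := by
    have t1 : |riemannSum h D - A| ≤ |riemannSum h D - riemannSum (u M) D|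
        + |riemannSum (u M) D - a M| + |a M - A| := by
      have := abs_sub_le (riemannSum h D) (riemannSum (u M) D) (a M)
      have h2 := abs_sub_le (riemannSum h D) (a M) A
      linarith
    have t2 := hsplit
    linarith [hE2.le, hE3, hdouble, t2, t1]
  have hlt : ε' * I.vol + 4 * ε' < ε := by
    rw [hε'def]
    rw [div_mul_eq_mul_div, ← sub_pos]
    have e : ε - (ε * I.vol / (I.vol + 8) + 4 * (ε / (I.vol + 8)))
        = ε * 4 / (I.vol + 8) := by
      field_simp
      ring
    rw [e]
    positivity
  linarith [hfinal, hlt]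

end KeyLemma

lemma ennreal_eq_zero_of_forall_le {x : ℝ≥0∞}
    (h : ∀ ε : ℝ, 0 < ε → x ≤ ENNReal.ofReal ε) : x = 0 := by
  refine le_antisymm ?_ zero_le
  refine ENNReal.le_of_forall_pos_le_add (fun ε hε _ => ?_)
  calc x ≤ ENNReal.ofReal (ε : ℝ) := h _ (by exact_mod_cast hε)
    _ = (ε : ℝ≥0∞) := ENNReal.ofReal_coe_nnreal
    _ = 0 + (ε : ℝ≥0∞) := (zero_add _).symm

/-- **Riesz–Fischer (mean completeness) for gauge integrals.** -/
theorem riesz_fischer_hk (I : Brick ι) (p : ℝ) (hp : 0 < p)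
    (f : ℕ → (ι → ℝ) → ℝ)
    (hmeas : ∀ j, ∀ b : ℝ, ∃ c : ℝ,
      HasHK I (fun P => if b ≤ f j P then (1 : ℝ) else 0) c)
    (B : ℕ → ℕ → ℝ)
    (hB : ∀ j k, HasHK I (fun P => |f j P - f k P| ^ p) (B j k))
    (hcauchy : ∀ ε > (0 : ℝ), ∃ K : ℕ, ∀ j k, k ≥ K → j > k → B j k < ε) :
    ∃ (F : (ι → ℝ) → ℝ) (C : ℕ → ℝ),
      (∀ j, HasHK I (fun P => |f j P - F P| ^ p) (C j)) ∧
      Filter.Tendsto C Filter.atTop (nhds 0) ∧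
      ∀ (G : (ι → ℝ) → ℝ) (C' : ℕ → ℝ),
        (∀ j, HasHK I (fun P => |f j P - G P| ^ p) (C' j)) →
        Filter.Tendsto C' Filter.atTop (nhds 0) →
        mustar I {P | F P ≠ G P} = 0 := by
  -- basic facts about B
  have hBsymm : ∀ j k, B j k = B k j := by
    intro j k
    refine HasHK.unique (hB j k) ?_
    exact (hB k j).congr (fun x => by rw [abs_sub_comm])
  have hBnonneg : ∀ j k, 0 ≤ B j k :=
    fun j k => (hB j k).nonneg (fun x _ => Real.rpow_nonneg (abs_nonneg _) p)
  have hBdiag : ∀ j, B j j = 0 := by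
    intro j
    have hz : HasHK I (fun P => |f j P - f j P| ^ p) 0 :=
      HasHK.zero.congr (fun x =>
        (by rw [sub_self, abs_zero, Real.zero_rpow (ne_of_gt hp)] :
          |f j x - f j x| ^ p = 0).symm)
    exact HasHK.unique (hB j j) hz
  -- constants
  have hθex : ∀ k : ℕ, ∃ θ : ℝ, 0 < θ ∧ (1+θ)^p = 1 + ((1:ℝ)/2)^(k+1) :=
    fun k => exists_theta hp (by positivity)
  choose θ hθpos hθeq using hθex
  have hKpos : ∀ k, 0 < ((1 + θ k)/θ k)^p :=
    fun k => Real.rpow_pos_of_pos (div_pos (by linarith [hθpos k]) (hθpos k)) p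
  set ρ : ℕ → ℝ := fun k => min (((1:ℝ)/2)^(k+1) * (((1:ℝ)/2)^k)^p)
    (((1:ℝ)/2)^(k+1) / ((1 + θ k)/θ k)^p) with hρdef
  have hρpos : ∀ k, 0 < ρ k := by
    intro k
    apply lt_min
    · have := Real.rpow_pos_of_pos (show (0:ℝ) < ((1:ℝ)/2)^k by positivity) p
      positivity
    · exact div_pos (by positivity) (hKpos k)
  -- the subsequence
  choose Kf hKf using hcauchy
  set n : ℕ → ℕ := fun m => Nat.rec (Kf (ρ 0) (hρpos 0))
    (fun m' prev => max (Kf (ρ (m'+1)) (hρpos (m'+1))) (prev + 1)) m with hndef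
  have hn_succ : ∀ m, n (m+1) = max (Kf (ρ (m+1)) (hρpos (m+1))) (n m + 1) := fun m => rfl
  have hnKf : ∀ m, Kf (ρ m) (hρpos m) ≤ n m := by
    intro m
    cases m with
    | zero => exact le_rfl
    | succ m' => rw [hn_succ m']; exact le_max_left _ _
  have hnmono : StrictMono n := by
    apply strictMono_nat_of_lt_succ
    intro m
    rw [hn_succ m]
    exact lt_of_lt_of_le (Nat.lt_succ_self _) (le_max_right _ _)
  have hn_small : ∀ m, ∀ j k, k ≥ n m → j > k → B j k < ρ m :=
    fun m j k hk hjk => hKf (ρ m) (hρpos m) j k (le_trans (hnKf m) hk) hjk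
  have hstep' : ∀ m, B (n (m+1)) (n m) < ρ m :=
    fun m => hn_small m _ _ le_rfl (hnmono (Nat.lt_succ_self m))
  -- the exceptional null set
  set E : Set (ι → ℝ) :=
    {P | ¬ ∃ L, Filter.Tendsto (fun m => f (n m) P) Filter.atTop (nhds L)} with hEdef
  have hYk : ∀ k, mustar I {P | ((1:ℝ)/2)^k ≤ |f (n (k+1)) P - f (n k) P|}
      ≤ ENNReal.ofReal (((1:ℝ)/2)^(k+1)) := by
    intro k
    have hBv := hstep' k
    have hBv0 := hBnonneg (n (k+1)) (n k)
    have ha : (0:ℝ) < (((1:ℝ)/2)^k)^p :=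
      Real.rpow_pos_of_pos (by positivity) p
    have hche := chebyshev (hB (n (k+1)) (n k))
      (fun x => Real.rpow_nonneg (abs_nonneg _) p) ha
    have hsub : {P | ((1:ℝ)/2)^k ≤ |f (n (k+1)) P - f (n k) P|}
        ⊆ {x | (((1:ℝ)/2)^k)^p ≤ |f (n (k+1)) x - f (n k) x|^p} := by
      intro x hx
      exact Real.rpow_le_rpow (by positivity) hx hp.le
    refine le_trans (mustar_mono hsub) (le_trans hche (ENNReal.ofReal_le_ofReal ?_))
    rw [div_le_iff₀ ha]
    have h2 : ρ k ≤ ((1:ℝ)/2)^(k+1) * (((1:ℝ)/2)^k)^p := min_le_left _ _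
    linarith
  have hZ : ∀ M : ℕ, mustar I
      (⋃ k : ℕ, {P | ((1:ℝ)/2)^(M+k) ≤ |f (n (M+k+1)) P - f (n (M+k)) P|})
      ≤ ENNReal.ofReal (((1:ℝ)/2)^M) := by
    intro M
    apply mustar_iUnion_le _ (fun k => ((1:ℝ)/2)^(M+k+1)) (((1:ℝ)/2)^M)
      (fun k => by positivity) (fun k => hYk (M+k))
    intro s
    have e : ∀ k, ((1:ℝ)/2)^(M+k+1) = ((1:ℝ)/2)^M * ((1:ℝ)/2)^(k+1) := by
      intro k
      rw [show M+k+1 = M + (k+1) by omega, pow_add]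
    calc ∑ k ∈ s, ((1:ℝ)/2)^(M+k+1) = ∑ k ∈ s, ((1:ℝ)/2)^M * ((1:ℝ)/2)^(k+1) :=
          Finset.sum_congr rfl (fun k _ => e k)
      _ = ((1:ℝ)/2)^M * ∑ k ∈ s, ((1:ℝ)/2)^(k+1) := by rw [Finset.mul_sum]
      _ ≤ ((1:ℝ)/2)^M * 1 :=
          mul_le_mul_of_nonneg_left (geom_partial s) (by positivity)
      _ = ((1:ℝ)/2)^M := mul_one _
  have hEsub : ∀ M : ℕ, E ⊆
      ⋃ k : ℕ, {P | ((1:ℝ)/2)^(M+k) ≤ |f (n (M+k+1)) P - f (n (M+k)) P|} := by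
    intro M P hP
    by_contra hPn
    apply hP
    simp only [Set.mem_iUnion, Set.mem_setOf_eq, not_exists, not_le] at hPn
    have hc : CauchySeq (fun k => f (n (M + k)) P) := by
      apply cauchySeq_of_dist_le_of_summable (fun k => ((1:ℝ)/2)^(M+k))
      · intro k
        rw [Real.dist_eq, abs_sub_comm]
        exact (hPn k).le
      · refine (summable_geometric_two.mul_left (((1:ℝ)/2)^M)).congr (fun k => ?_)
        rw [← pow_add]
    obtain ⟨L, hL⟩ := cauchySeq_tendsto_of_complete hc
    refine ⟨L, ?_⟩
    rw [show (fun k => f (n (M + k)) P) = (fun k => f (n (k + M)) P) from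
      funext (fun k => by rw [add_comm])] at hL
    exact (Filter.tendsto_add_atTop_iff_nat M).1 hL
  have hEnull : mustar I E = 0 := by
    apply ennreal_eq_zero_of_forall_le
    intro ε hε
    obtain ⟨M, hM⟩ := exists_pow_lt_of_lt_one hε (by norm_num : (1:ℝ)/2 < 1)
    exact le_trans (mustar_mono (hEsub M)) (le_trans (hZ M) (ENNReal.ofReal_le_ofReal hM.le))
  -- the limit function
  set F : (ι → ℝ) → ℝ := fun P =>
    if h : ∃ L, Filter.Tendsto (fun m => f (n m) P) Filter.atTop (nhds L)
    then h.choose else 0 with hFdef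
  have hFlim : ∀ P, P ∉ E →
      Filter.Tendsto (fun m => f (n m) P) Filter.atTop (nhds (F P)) := by
    intro P hP
    rw [hEdef, Set.mem_setOf_eq, not_not] at hP
    simp only [hFdef, dif_pos hP]
    exact hP.choose_spec
  -- the main convergence for each j
  have main : ∀ j : ℕ, ∃ Cj : ℝ,
      Filter.Tendsto (fun m => B j (n m)) Filter.atTop (nhds Cj) ∧
      HasHK I (fun P => |f j P - F P| ^ p) Cj := by
    intro j
    have h2p : (0:ℝ) ≤ 2^p := Real.rpow_nonneg (by norm_num) p
    set Sj : ℝ := 2^p * (B j (n 0) + ρ 0) with hSjdef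
    have hSj : ∀ m, B j (n m) ≤ Sj := by
      intro m
      have hBn0 : B (n 0) (n m) ≤ ρ 0 := by
        rcases Nat.eq_zero_or_pos m with hm | hm
        · rw [hm, hBdiag]
          exact (hρpos 0).le
        · rw [hBsymm]
          exact (hn_small 0 (n m) (n 0) le_rfl (hnmono hm)).le
      have hpt : ∀ x ∈ I.toSet, |f j x - f (n m) x|^p
          ≤ 2^p * (|f j x - f (n 0) x|^p + |f (n 0) x - f (n m) x|^p) := by
        intro x _
        have h1 : |f j x - f (n m) x| ≤ |f j x - f (n 0) x| + |f (n 0) x - f (n m) x| :=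
          abs_sub_le _ _ _
        have h2 := Real.rpow_le_rpow (abs_nonneg _) h1 hp.le
        have h3 := rpow_add_le_two hp (abs_nonneg (f j x - f (n 0) x))
          (abs_nonneg (f (n 0) x - f (n m) x))
        have h4 : 2^p * |f j x - f (n 0) x|^p + 2^p * |f (n 0) x - f (n m) x|^p
            = 2^p * (|f j x - f (n 0) x|^p + |f (n 0) x - f (n m) x|^p) := by ring
        linarith
      have hHKr : HasHK I (fun x => 2^p * (|f j x - f (n 0) x|^p
          + |f (n 0) x - f (n m) x|^p)) (2^p * (B j (n 0) + B (n 0) (n m))) :=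
        ((hB j (n 0)).add (hB (n 0) (n m))).smul _
      have h5 := (hB j (n m)).le hHKr hpt
      have h6 : 2^p * (B j (n 0) + B (n 0) (n m)) ≤ Sj := by
        rw [hSjdef]
        exact mul_le_mul_of_nonneg_left (by linarith) h2p
      linarith
    have hSj0 : 0 ≤ Sj := le_trans (hBnonneg j (n 0)) (hSj 0)
    -- cut functions
    set u : ℕ → (ι → ℝ) → ℝ := fun m P => if P ∈ E then 0 else |f j P - f (n m) P|^p
      with hudef
    set w : ℕ → (ι → ℝ) → ℝ := fun m P => if P ∈ E then 0 else
      (((1:ℝ)/2)^(m+1) * (|f j P - f (n (m+1)) P|^p + |f j P - f (n m) P|^p)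
        + ((1 + θ m)/θ m)^p * |f (n m) P - f (n (m+1)) P|^p) with hwdef
    set W : ℕ → ℝ := fun m => ((1:ℝ)/2)^(m+1) * (B j (n (m+1)) + B j (n m))
      + ((1 + θ m)/θ m)^p * B (n m) (n (m+1)) with hWdef
    set τ : ℕ → ℝ := fun m => (2*Sj+1) * ((1:ℝ)/2)^(m+1) with hτdef
    set ht : (ι → ℝ) → ℝ := fun P => if P ∈ E then 0 else |f j P - F P|^p with htdef
    have hu : ∀ m, HasHK I (u m) (B j (n m)) := by
      intro m
      refine HasHK.congr_null hEnull (fun x hx => ?_) (hB j (n m))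
      simp only [hudef, if_neg hx]
    have hw : ∀ m, HasHK I (w m) (W m) := by
      intro m
      refine HasHK.congr_null hEnull (fun x hx => ?_)
        ((((hB j (n (m+1))).add (hB j (n m))).smul (((1:ℝ)/2)^(m+1))).add
          ((hB (n m) (n (m+1))).smul (((1 + θ m)/θ m)^p)))
      simp only [hwdef, if_neg hx]
    have hw0 : ∀ m x, 0 ≤ w m x := by
      intro m x
      simp only [hwdef]
      by_cases hx : x ∈ E
      · rw [if_pos hx]
      · rw [if_neg hx]
        have r1 : (0:ℝ) ≤ |f j x - f (n (m+1)) x|^p := Real.rpow_nonneg (abs_nonneg _) p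
        have r2 : (0:ℝ) ≤ |f j x - f (n m) x|^p := Real.rpow_nonneg (abs_nonneg _) p
        have r3 : (0:ℝ) ≤ |f (n m) x - f (n (m+1)) x|^p := Real.rpow_nonneg (abs_nonneg _) p
        have r4 : (0:ℝ) ≤ ((1:ℝ)/2)^(m+1) := by positivity
        have r5 := (hKpos m).le
        positivity
    have hWτ : ∀ m, W m ≤ τ m := by
      intro m
      have hsym : B (n m) (n (m+1)) = B (n (m+1)) (n m) := hBsymm _ _
      have h1 : B (n m) (n (m+1)) ≤ ρ m := by
        rw [hsym]; exact (hstep' m).le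
      have h2 : ρ m ≤ ((1:ℝ)/2)^(m+1) / ((1 + θ m)/θ m)^p := min_le_right _ _
      have hK := hKpos m
      have h3 : ((1 + θ m)/θ m)^p * B (n m) (n (m+1)) ≤ ((1:ℝ)/2)^(m+1) := by
        calc ((1 + θ m)/θ m)^p * B (n m) (n (m+1))
            ≤ ((1 + θ m)/θ m)^p * (((1:ℝ)/2)^(m+1) / ((1 + θ m)/θ m)^p) :=
              mul_le_mul_of_nonneg_left (h1.trans h2) hK.le
          _ = ((1:ℝ)/2)^(m+1) := by
              rw [mul_comm, div_mul_cancel₀ _ (ne_of_gt hK)]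
      have h4 : B j (n (m+1)) + B j (n m) ≤ 2 * Sj := by
        linarith [hSj m, hSj (m+1)]
      have h5 : ((1:ℝ)/2)^(m+1) * (B j (n (m+1)) + B j (n m))
          ≤ ((1:ℝ)/2)^(m+1) * (2 * Sj) :=
        mul_le_mul_of_nonneg_left h4 (by positivity)
      have e : (2*Sj+1) * ((1:ℝ)/2)^(m+1)
          = ((1:ℝ)/2)^(m+1) * (2 * Sj) + ((1:ℝ)/2)^(m+1) := by ring
      rw [hWdef, hτdef]
      dsimp only
      linarith [h3, h5, e]
    have hdom : ∀ m x, |u (m+1) x - u m x| ≤ w m x := by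
      intro m x
      by_cases hx : x ∈ E
      · simp only [hudef, hwdef, if_pos hx]
        simp
      · simp only [hudef, hwdef, if_neg hx]
        have h := abs_abs_rpow_sub_le hp (hθpos m) (f j x - f (n (m+1)) x)
          (f j x - f (n m) x)
        rw [hθeq m] at h
        have e1 : (f j x - f (n (m+1)) x) - (f j x - f (n m) x)
            = f (n m) x - f (n (m+1)) x := by ring
        rw [e1] at h
        have e2 : ((1:ℝ) + ((1:ℝ)/2)^(m+1) - 1) = ((1:ℝ)/2)^(m+1) := by ring
        rw [e2] at h
        exact h
    have hτ0 : ∀ m, (0:ℝ) ≤ τ m := by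
      intro m
      rw [hτdef]
      dsimp only
      positivity
    have hτsum : Summable τ := by
      rw [hτdef]
      apply Summable.mul_left
      refine (summable_geometric_two.mul_left ((1:ℝ)/2)).congr (fun m => ?_)
      rw [pow_succ]
      ring
    have hlim : ∀ x, Filter.Tendsto (fun m => u m x) Filter.atTop (nhds (ht x)) := by
      intro x
      by_cases hx : x ∈ E
      · simp only [hudef, htdef, if_pos hx]
        exact tendsto_const_nhds
      · simp only [hudef, htdef, if_neg hx]
        have h1 := hFlim x hx
        have h2 : Filter.Tendsto (fun m => |f j x - f (n m) x|) Filter.atTop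
            (nhds (|f j x - F x|)) := (tendsto_const_nhds.sub h1).abs
        exact h2.rpow_const (Or.inr hp.le)
    obtain ⟨Cj, hCjlim, hCjHK⟩ := key_convergence u (fun m => B j (n m)) w W τ ht
      hu hw hw0 hWτ hdom hτ0 hτsum hlim
    refine ⟨Cj, hCjlim, ?_⟩
    refine HasHK.congr_null hEnull (fun x hx => ?_) hCjHK
    simp only [htdef, if_neg hx]
  choose C hC2 hC1 using main
  have hCt : Filter.Tendsto C Filter.atTop (nhds 0) := by
    rw [Metric.tendsto_atTop]
    intro ε hε
    have hε2 : (0:ℝ) < ε/2 := by linarith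
    refine ⟨Kf (ε/2) hε2, fun j hj => ?_⟩
    have h1 : C j ≤ ε/2 := by
      apply le_of_tendsto (hC2 j)
      rw [Filter.eventually_atTop]
      refine ⟨j+1, fun m hm => ?_⟩
      have hnm : j < n m := lt_of_lt_of_le (Nat.lt_succ_self j) (le_trans hm (hnmono.le_apply))
      have hlt := hKf (ε/2) hε2 (n m) j hj hnm
      rw [hBsymm j (n m)]
      exact hlt.le
    have h2 : 0 ≤ C j :=
      ge_of_tendsto (hC2 j) (Filter.Eventually.of_forall (fun m => hBnonneg j (n m)))
    rw [Real.dist_eq, sub_zero, abs_of_nonneg h2]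
    linarith
  refine ⟨F, C, hC1, hCt, ?_⟩
  -- uniqueness
  intro G C' hG hC'
  have h2p : (0:ℝ) ≤ 2^p := Real.rpow_nonneg (by norm_num) p
  have hQt : Filter.Tendsto (fun j => 2^p * (C j + C' j)) Filter.atTop (nhds 0) := by
    have h := (hCt.add hC').const_mul (2^p)
    simpa using h
  have hXm : ∀ m : ℕ, mustar I {P | (1:ℝ)/((m:ℝ)+1) ≤ |F P - G P|} = 0 := by
    intro m
    have ham : (0:ℝ) < ((1:ℝ)/((m:ℝ)+1))^p := by
      apply Real.rpow_pos_of_pos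
      positivity
    apply ennreal_eq_zero_of_forall_le
    intro ε hε
    obtain ⟨j, hj⟩ := (hQt.eventually_lt_const (mul_pos ham hε)).exists
    have hq : HasHK I (fun P => 2^p * (|f j P - F P|^p + |f j P - G P|^p))
        (2^p * (C j + C' j)) := ((hC1 j).add (hG j)).smul _
    have hq0 : ∀ x, 0 ≤ 2^p * (|f j x - F x|^p + |f j x - G x|^p) :=
      fun x => mul_nonneg h2p (add_nonneg (Real.rpow_nonneg (abs_nonneg _) p)
        (Real.rpow_nonneg (abs_nonneg _) p))
    have hsub : {P | (1:ℝ)/((m:ℝ)+1) ≤ |F P - G P|}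
        ⊆ {x | ((1:ℝ)/((m:ℝ)+1))^p ≤ 2^p * (|f j x - F x|^p + |f j x - G x|^p)} := by
      intro x hx
      simp only [Set.mem_setOf_eq] at hx ⊢
      have h1 : ((1:ℝ)/((m:ℝ)+1))^p ≤ |F x - G x|^p :=
        Real.rpow_le_rpow (by positivity) hx hp.le
      have h2 : |F x - G x| ≤ |f j x - F x| + |f j x - G x| := by
        have e : F x - G x = (f j x - G x) - (f j x - F x) := by ring
        rw [e, sub_eq_add_neg]
        calc |(f j x - G x) + -(f j x - F x)| ≤ |f j x - G x| + |-(f j x - F x)| :=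
              abs_add_le _ _
          _ = |f j x - F x| + |f j x - G x| := by rw [abs_neg]; ring
      have h3 : |F x - G x|^p ≤ (|f j x - F x| + |f j x - G x|)^p :=
        Real.rpow_le_rpow (abs_nonneg _) h2 hp.le
      have h4 := rpow_add_le_two hp (abs_nonneg (f j x - F x)) (abs_nonneg (f j x - G x))
      have h5 : 2^p * |f j x - F x|^p + 2^p * |f j x - G x|^p
          = 2^p * (|f j x - F x|^p + |f j x - G x|^p) := by ring
      linarith
    have hche := chebyshev hq hq0 ham
    refine le_trans (mustar_mono hsub) (le_trans hche (ENNReal.ofReal_le_ofReal ?_))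
    rw [div_le_iff₀ ham]
    nlinarith [hj]
  have hsubU : {P | F P ≠ G P} ⊆ ⋃ m : ℕ, {P | (1:ℝ)/((m:ℝ)+1) ≤ |F P - G P|} := by
    intro x hx
    have h0 : 0 < |F x - G x| := abs_pos.2 (sub_ne_zero.2 hx)
    obtain ⟨m, hm⟩ := exists_nat_one_div_lt h0
    exact Set.mem_iUnion.2 ⟨m, hm.le⟩
  have hUnull := mustar_iUnion_null _ hXm
  exact le_antisymm ((mustar_mono hsubU).trans hUnull.le) zero_le
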